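/- arXiv:2504.00004 — 5 statements merged into one kernel-verified Lean document; each statement's English description precedes it below -/
import Mathlib

section
/- For every natural number n and every natural number r ≥ 1, ∑_{k=0}^{n} (−1)^k · C(n,k) / ((k+1)(k+2)(k+r)) = ( 1 / ∏_{j=1}^{r} (n+j) ) · ∑_{k=0}^{n} ( ∏_{j=1}^{r−1} (k+j) ) / (k+2), as an identity of real numbers, where the inner product ∏_{j=1}^{r−1}(k+j) equals 1 when r = 1. -/
open Finset

lemma keyF : ∀ (N : ℕ) (a : ℝ), 0 < a →
    ∑ j ∈ range (N+1), (-1:ℝ)^j * (N.choose j : ℝ) / (a + j) =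
      (N.factorial : ℝ) / ∏ i ∈ range (N+1), (a + i) := by
  intro N
  induction N with
  | zero => intro a ha; simp
  | succ N ih =>
    intro a ha
    have hstep : ∑ j ∈ range (N+2), (-1:ℝ)^j * ((N+1).choose j : ℝ) / (a + j)
        = (∑ j ∈ range (N+1), (-1:ℝ)^j * (N.choose j : ℝ) / (a + j))
          - ∑ j ∈ range (N+1), (-1:ℝ)^j * (N.choose j : ℝ) / ((a+1) + j) := by
      rw [Finset.sum_range_succ' (fun j => (-1:ℝ)^j * ((N+1).choose j : ℝ) / (a + j)) (N+1)]
      have e1 : ∀ i ∈ range (N+1),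
          (-1:ℝ)^(i+1) * ((N+1).choose (i+1) : ℝ) / (a + ((i+1 : ℕ) : ℝ))
          = -((-1:ℝ)^i * (N.choose i : ℝ) / ((a+1) + i))
            + (-1:ℝ)^(i+1) * (N.choose (i+1) : ℝ) / (a + ((i+1:ℕ):ℝ)) := by
        intro i _
        rw [Nat.choose_succ_succ']
        push_cast
        have h2 : a + (i + 1 : ℝ) ≠ 0 := by positivity
        field_simp
        ring
      rw [Finset.sum_congr rfl e1, Finset.sum_add_distrib]
      have e2 : ∑ i ∈ range (N+1), (-1:ℝ)^(i+1) * (N.choose (i+1) : ℝ) / (a + ((i+1:ℕ):ℝ))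
          = (∑ j ∈ range (N+1), (-1:ℝ)^j * (N.choose j : ℝ) / (a + j)) - 1/a := by
        have := Finset.sum_range_succ' (fun j => (-1:ℝ)^j * (N.choose j : ℝ) / (a + j)) (N+1)
        rw [Finset.sum_range_succ (fun j => (-1:ℝ)^j * (N.choose j : ℝ) / (a + j)) (N+1)] at this
        simp only [Nat.choose_succ_self, Nat.cast_zero, mul_zero, zero_mul, zero_div, add_zero,
          Nat.choose_zero_right, Nat.cast_one, pow_zero, one_mul, Nat.cast_zero] at this
        linarith [this]
      rw [e2]
      simp only [Nat.choose_zero_right, Nat.cast_one, pow_zero, Nat.cast_zero, add_zero, one_mul,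
        Finset.sum_neg_distrib]
      ring
    rw [hstep, ih a ha, ih (a+1) (by positivity)]
    set Pa := ∏ i ∈ range (N+1), (a + (i:ℝ)) with hPa
    set Pa1 := ∏ i ∈ range (N+1), ((a+1) + (i:ℝ)) with hPa1
    have hbig : ∏ i ∈ range (N+2), (a + (i:ℝ)) = Pa * (a + (N+1)) := by
      rw [Finset.prod_range_succ]; congr 1; push_cast; ring
    have hbig2 : ∏ i ∈ range (N+2), (a + (i:ℝ)) = Pa1 * a := by
      rw [Finset.prod_range_succ' (fun i => a + (i:ℝ)) (N+1)]
      simp only [Nat.cast_zero, add_zero]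
      congr 1
      apply Finset.prod_congr rfl
      intro i _; push_cast; ring
    have hPapos : 0 < Pa := Finset.prod_pos (fun i _ => by positivity)
    have hPa1pos : 0 < Pa1 := Finset.prod_pos (fun i _ => by positivity)
    have hkey : Pa * (a + (N+1)) = Pa1 * a := by rw [← hbig, ← hbig2]
    rw [hbig]
    have h3 : a + ((N:ℝ)+1) ≠ 0 := by positivity
    field_simp
    push_cast [Nat.factorial_succ]
    linear_combination (-(↑N.factorial : ℝ)) * hkey

lemma prodR (c : ℕ) : ∀ m : ℕ, ∏ i ∈ range m, ((c:ℝ) + 1 + i) = ((c+m).factorial : ℝ) / (c.factorial : ℝ) := by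
  intro m
  induction m with
  | zero => simp [div_self (Nat.cast_ne_zero.2 c.factorial_ne_zero : (c.factorial:ℝ) ≠ 0)]
  | succ m ih =>
    rw [Finset.prod_range_succ, ih]
    have h1 : (c.factorial : ℝ) ≠ 0 := Nat.cast_ne_zero.2 c.factorial_ne_zero
    rw [show c + (m+1) = (c+m)+1 from rfl, Nat.factorial_succ]
    push_cast
    field_simp
    ring

lemma prodIcc (c : ℕ) : ∀ s : ℕ, ∏ j ∈ Icc 1 s, ((c:ℝ) + j) = ((c+s).factorial : ℝ) / (c.factorial : ℝ) := by
  intro s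
  induction s with
  | zero => simp [div_self (Nat.cast_ne_zero.2 c.factorial_ne_zero : (c.factorial:ℝ) ≠ 0)]
  | succ s ih =>
    rw [Finset.prod_Icc_succ_top (Nat.succ_le_succ (Nat.zero_le s)), ih]
    have h1 : (c.factorial : ℝ) ≠ 0 := Nat.cast_ne_zero.2 c.factorial_ne_zero
    rw [show c + (s+1) = (c+s)+1 from rfl, Nat.factorial_succ]
    push_cast
    field_simp
    ring

theorem stmt_15 (n : ℕ) (r : ℕ) (hr : 1 ≤ r) :
    ∑ k ∈ range (n + 1),
        (-1 : ℝ) ^ k * (Nat.choose n k : ℝ) / (((k : ℝ) + 1) * ((k : ℝ) + 2) * ((k : ℝ) + r)) =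
      (1 / ∏ j ∈ Icc 1 r, ((n : ℝ) + j)) *
        ∑ k ∈ range (n + 1), (∏ j ∈ Icc 1 (r - 1), ((k : ℝ) + j)) / ((k : ℝ) + 2) := by
  have hfac : ∀ m : ℕ, (m.factorial : ℝ) ≠ 0 := fun m => Nat.cast_ne_zero.2 m.factorial_ne_zero
  have hr' : (1:ℝ) ≤ (r:ℝ) := by exact_mod_cast hr
  rw [Finset.mul_sum]
  have step1 : ∀ k ∈ range (n+1),
      (1 / ∏ j ∈ Icc 1 r, ((n:ℝ) + j)) * ((∏ j ∈ Icc 1 (r-1), ((k:ℝ) + j)) / ((k:ℝ) + 2))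
        = ∑ m ∈ Icc k n, (-1:ℝ)^(m-k) * ((n.choose k : ℝ) * ((n-k).choose (m-k) : ℝ)) /
            ((((k:ℝ)+2) * ((m:ℝ)+(r:ℝ)))) := by
    intro k hk
    rw [mem_range] at hk
    have hkn : k ≤ n := Nat.lt_succ_iff.mp hk
    have hFa : ∑ j ∈ range ((n-k)+1), (-1:ℝ)^j * ((n-k).choose j : ℝ) / (((k:ℝ)+(r:ℝ)) + j)
        = ((n-k).factorial : ℝ) / ∏ i ∈ range ((n-k)+1), (((k:ℝ)+(r:ℝ)) + i) :=
      keyF (n-k) ((k:ℝ)+(r:ℝ)) (by positivity)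
    have hprod : ∏ i ∈ range ((n-k)+1), (((k:ℝ)+(r:ℝ)) + i)
        = ((n+r).factorial : ℝ) / ((k+(r-1)).factorial : ℝ) := by
      have h := prodR (k+(r-1)) ((n-k)+1)
      rw [show k+(r-1) + ((n-k)+1) = n + r by omega] at h
      rw [← h]
      apply Finset.prod_congr rfl
      intro i _
      push_cast [Nat.cast_sub hr]
      ring
    have hQ : ∏ j ∈ Icc 1 (r-1), ((k:ℝ)+j) = ((k+(r-1)).factorial : ℝ)/(k.factorial : ℝ) :=
      prodIcc k (r-1)
    have hP : ∏ j ∈ Icc 1 r, ((n:ℝ)+j) = ((n+r).factorial : ℝ)/(n.factorial : ℝ) := prodIcc n r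
    have hre : ∑ m ∈ Icc k n, (-1:ℝ)^(m-k) * ((n.choose k : ℝ) * ((n-k).choose (m-k) : ℝ)) /
            ((((k:ℝ)+2) * ((m:ℝ)+(r:ℝ))))
        = (n.choose k : ℝ)/((k:ℝ)+2) *
            ∑ j ∈ range ((n-k)+1), (-1:ℝ)^j * ((n-k).choose j : ℝ)/(((k:ℝ)+(r:ℝ)) + j) := by
      rw [Finset.mul_sum, ← Finset.Ico_add_one_right_eq_Icc, Finset.sum_Ico_eq_sum_range,
        show n + 1 - k = (n-k)+1 by omega]
      apply Finset.sum_congr rfl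
      intro i _
      rw [show k + i - k = i by omega]
      have h1 : ((k:ℝ)+2) ≠ 0 := by positivity
      have h2 : ((k:ℝ)+(r:ℝ)+(i:ℝ)) ≠ 0 := by
        have := Nat.cast_nonneg (α := ℝ) k
        have := Nat.cast_nonneg (α := ℝ) i
        intro hcon; nlinarith [hr']
      push_cast
      field_simp
      ring
    rw [hre, hFa, hprod, hQ, hP]
    have hc' : (n.choose k : ℝ) * (k.factorial:ℝ) * ((n-k).factorial:ℝ) = (n.factorial:ℝ) := by
      exact_mod_cast congrArg (Nat.cast : ℕ → ℝ) (Nat.choose_mul_factorial_mul_factorial hkn)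
    have hk2 : ((k:ℝ)+2) ≠ 0 := by positivity
    field_simp
    linear_combination (-1 : ℝ) * hc'
  rw [Finset.sum_congr rfl step1]
  rw [show (∑ k ∈ range (n+1), ∑ m ∈ Icc k n, (-1:ℝ)^(m-k) * ((n.choose k : ℝ) * ((n-k).choose (m-k) : ℝ)) / ((((k:ℝ)+2) * ((m:ℝ)+(r:ℝ)))))
      = ∑ m ∈ range (n+1), ∑ k ∈ range (m+1), (-1:ℝ)^(m-k) * ((n.choose k : ℝ) * ((n-k).choose (m-k) : ℝ)) / ((((k:ℝ)+2) * ((m:ℝ)+(r:ℝ))))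
      from Finset.sum_comm' (fun x y => by simp only [mem_range, mem_Icc]; omega)]
  refine Finset.sum_congr rfl fun m hm => ?_
  rw [mem_range] at hm
  have hmn : m ≤ n := Nat.lt_succ_iff.mp hm
  have e : ∀ k ∈ range (m+1),
      (-1:ℝ)^(m-k) * ((n.choose k : ℝ) * ((n-k).choose (m-k) : ℝ)) /
            ((((k:ℝ)+2) * ((m:ℝ)+(r:ℝ))))
      = ((-1:ℝ)^m * (n.choose m:ℝ) / ((m:ℝ)+(r:ℝ))) *
          ((-1:ℝ)^k * (m.choose k:ℝ)/((2:ℝ)+(k:ℝ))) := by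
    intro k hk
    rw [mem_range] at hk
    have hkm : k ≤ m := Nat.lt_succ_iff.mp hk
    have hcc : (n.choose k : ℝ) * ((n-k).choose (m-k) : ℝ) = (n.choose m : ℝ) * (m.choose k : ℝ) := by
      exact_mod_cast congrArg (Nat.cast : ℕ → ℝ) (Nat.choose_mul (n := n) hkm).symm
    have hsq : (-1:ℝ)^k * (-1:ℝ)^k = 1 := by
      rw [← pow_add, ← two_mul, pow_mul]; norm_num
    have hsign : (-1:ℝ)^(m-k) = (-1:ℝ)^m * (-1:ℝ)^k := by
      have h1 : (-1:ℝ)^(m-k) * (-1:ℝ)^k = (-1:ℝ)^m := by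
        rw [← pow_add, show m - k + k = m by omega]
      calc (-1:ℝ)^(m-k) = (-1:ℝ)^(m-k) * ((-1:ℝ)^k * (-1:ℝ)^k) := by rw [hsq, mul_one]
        _ = ((-1:ℝ)^(m-k) * (-1:ℝ)^k) * (-1:ℝ)^k := by ring
        _ = (-1:ℝ)^m * (-1:ℝ)^k := by rw [h1]
    have h1 : ((k:ℝ)+2) ≠ 0 := by positivity
    have h2 : ((m:ℝ)+(r:ℝ)) ≠ 0 := by
      intro hcon; nlinarith [hr', Nat.cast_nonneg (α := ℝ) m]
    rw [hsign, hcc]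
    field_simp
    ring
  rw [Finset.sum_congr rfl e, ← Finset.mul_sum, keyF m 2 (by norm_num)]
  have hprod2 : ∏ i ∈ range (m+1), ((2:ℝ) + i) = ((m+2).factorial : ℝ) := by
    have h := prodR 1 (m+1)
    rw [show 1 + (m+1) = m + 2 by omega] at h
    simp only [Nat.factorial_one, Nat.cast_one, div_one] at h
    rw [← h]
    apply Finset.prod_congr rfl
    intro i _
    norm_num
  rw [hprod2]
  have hm1 : ((m:ℝ)+1) ≠ 0 := by positivity
  have hm2 : ((m:ℝ)+2) ≠ 0 := by positivity
  have hmr : ((m:ℝ)+(r:ℝ)) ≠ 0 := by positivity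
  rw [show (m+2).factorial = (m+2) * ((m+1) * m.factorial) by
    rw [← Nat.factorial_succ, ← Nat.factorial_succ]]
  push_cast
  field_simp
end

section
/- For every natural number n and every complex number t, ∑_{k=0}^{n} (−1)^k · 4^k · C(n+k, n−k) · t^k = ∑_{k=0}^{n} (−1)^{n−k} · C(2n+1, 2k+1) · (1−t)^k · t^{n−k}. -/
open Finset

noncomputable def Sf (n : ℕ) (t : ℂ) : ℂ :=
  ∑ k ∈ range (n + 1), ((-4 : ℂ) * t) ^ k * (Nat.choose (n + k) (2 * k) : ℂ)

noncomputable def Rf (n : ℕ) (t : ℂ) : ℂ :=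
  ∑ k ∈ range (n + 1),
    (-1 : ℂ) ^ (n - k) * (Nat.choose (2 * n + 1) (2 * k + 1) : ℂ) * (1 - t) ^ k * t ^ (n - k)

lemma choose_key (m j : ℕ) :
    Nat.choose (m + 2) (2 * j + 2) + Nat.choose m (2 * j + 2)
      = 2 * Nat.choose (m + 1) (2 * j + 2) + Nat.choose m (2 * j) := by
  rw [show m + 2 = (m + 1) + 1 from rfl, Nat.choose_succ_succ (m+1) (2*j+1),
    Nat.choose_succ_succ m (2*j), Nat.choose_succ_succ m (2*j+1)]
  ring

lemma Sf_rec (n : ℕ) (t : ℂ) :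
    Sf (n + 2) t = (2 - 4 * t) * Sf (n + 1) t - Sf n t := by
  have z1 : Nat.choose (n + 2 + (n + 3)) (2 * (n + 3)) = 0 :=
    Nat.choose_eq_zero_of_lt (by omega)
  have z2 : Nat.choose (n + 1 + (n + 3)) (2 * (n + 3)) = 0 :=
    Nat.choose_eq_zero_of_lt (by omega)
  have z3 : Nat.choose (n + 1 + (n + 2)) (2 * (n + 2)) = 0 :=
    Nat.choose_eq_zero_of_lt (by omega)
  have z4 : Nat.choose (n + (n + 3)) (2 * (n + 3)) = 0 :=
    Nat.choose_eq_zero_of_lt (by omega)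
  have z5 : Nat.choose (n + (n + 2)) (2 * (n + 2)) = 0 :=
    Nat.choose_eq_zero_of_lt (by omega)
  have z6 : Nat.choose (n + (n + 1)) (2 * (n + 1)) = 0 :=
    Nat.choose_eq_zero_of_lt (by omega)
  have h1 : Sf (n + 2) t = ∑ k ∈ range (n + 4), ((-4 : ℂ) * t) ^ k * (Nat.choose (n + 2 + k) (2 * k) : ℂ) := by
    rw [Sf, Finset.sum_range_succ (n := n + 3), z1]
    norm_num
  have h2 : Sf (n + 1) t = ∑ k ∈ range (n + 4), ((-4 : ℂ) * t) ^ k * (Nat.choose (n + 1 + k) (2 * k) : ℂ) := by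
    rw [Sf, Finset.sum_range_succ (n := n + 3), Finset.sum_range_succ (n := n + 2), z2, z3]
    norm_num
  have h3 : Sf n t = ∑ k ∈ range (n + 4), ((-4 : ℂ) * t) ^ k * (Nat.choose (n + k) (2 * k) : ℂ) := by
    rw [Sf, Finset.sum_range_succ (n := n + 3), Finset.sum_range_succ (n := n + 2),
      Finset.sum_range_succ (n := n + 1), z4, z5, z6]
    norm_num
  rw [h1, h2, h3]
  have key : ∑ k ∈ range (n + 4), ((-4 : ℂ) * t) ^ k *
        ((Nat.choose (n + 2 + k) (2 * k) : ℂ) - 2 * (Nat.choose (n + 1 + k) (2 * k) : ℂ)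
          + (Nat.choose (n + k) (2 * k) : ℂ))
      = ∑ k ∈ range (n + 4), ((-4 : ℂ) * t) * (((-4 : ℂ) * t) ^ k * (Nat.choose (n + 1 + k) (2 * k) : ℂ)) := by
    rw [Finset.sum_range_succ' (n := n + 3),
      Finset.sum_range_succ (f := fun k => ((-4 : ℂ) * t) * (((-4 : ℂ) * t) ^ k * (Nat.choose (n + 1 + k) (2 * k) : ℂ))) (n + 3)]
    rw [z2]
    have : ∀ j ∈ range (n + 3), ((-4 : ℂ) * t) ^ (j+1) *
        ((Nat.choose (n + 2 + (j+1)) (2 * (j+1)) : ℂ) - 2 * (Nat.choose (n + 1 + (j+1)) (2 * (j+1)) : ℂ)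
          + (Nat.choose (n + (j+1)) (2 * (j+1)) : ℂ))
        = ((-4 : ℂ) * t) * (((-4 : ℂ) * t) ^ j * (Nat.choose (n + 1 + j) (2 * j) : ℂ)) := by
      intro j _
      have hc := choose_key (n + 1 + j) j
      have hc' : (Nat.choose (n + 1 + j + 2) (2 * j + 2) : ℂ) + (Nat.choose (n + 1 + j) (2 * j + 2) : ℂ)
          = 2 * (Nat.choose (n + 1 + j + 1) (2 * j + 2) : ℂ) + (Nat.choose (n + 1 + j) (2 * j) : ℂ) := by
        exact_mod_cast congrArg (Nat.cast : ℕ → ℂ) hc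
      have e1 : n + 2 + (j + 1) = n + 1 + j + 2 := by ring
      have e2 : n + 1 + (j + 1) = n + 1 + j + 1 := by ring
      have e3 : n + (j + 1) = n + 1 + j := by ring
      have e4 : 2 * (j + 1) = 2 * j + 2 := by ring
      rw [e1, e2, e3, e4, pow_succ]
      linear_combination (((-4 : ℂ) * t) ^ j * ((-4 : ℂ) * t)) * hc'
    rw [Finset.sum_congr rfl this]
    norm_num
  have key2 : (∑ k ∈ range (n + 4), ((-4 : ℂ) * t) ^ k * (Nat.choose (n + 2 + k) (2 * k) : ℂ))
      - 2 * (∑ k ∈ range (n + 4), ((-4 : ℂ) * t) ^ k * (Nat.choose (n + 1 + k) (2 * k) : ℂ))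
      + (∑ k ∈ range (n + 4), ((-4 : ℂ) * t) ^ k * (Nat.choose (n + k) (2 * k) : ℂ))
      = ((-4 : ℂ) * t) * ∑ k ∈ range (n + 4), ((-4 : ℂ) * t) ^ k * (Nat.choose (n + 1 + k) (2 * k) : ℂ) := by
    rw [Finset.mul_sum, Finset.mul_sum, ← Finset.sum_sub_distrib, ← Finset.sum_add_distrib, ← key]
    exact Finset.sum_congr rfl fun k _ => by ring
  linear_combination key2

lemma sum_range_two_mul' {M : Type*} [AddCommMonoid M] (n : ℕ) (f : ℕ → M) :
    ∑ j ∈ range (2 * n), f j = ∑ k ∈ range n, (f (2 * k) + f (2 * k + 1)) := by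
  induction n with
  | zero => simp
  | succ n ih =>
      rw [show 2 * (n + 1) = (2 * n) + 1 + 1 by ring, Finset.sum_range_succ,
        Finset.sum_range_succ, ih, Finset.sum_range_succ, add_assoc]

open Complex in
lemma Rf_eq (n : ℕ) (t c s : ℂ) (hs : s ^ 2 = t) (hc : c ^ 2 = 1 - t) (hc0 : c ≠ 0) :
    Rf n t = ((c + I * s) ^ (2 * n + 1) + (c - I * s) ^ (2 * n + 1)) / (2 * c) := by
  have refl1 : Rf n t
      = ∑ j ∈ range (n + 1),
        (-1 : ℂ) ^ j * (Nat.choose (2 * n + 1) (2 * j) : ℂ) * (1 - t) ^ (n - j) * t ^ j := by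
    rw [Rf, ← Finset.sum_range_reflect]
    apply Finset.sum_congr rfl
    intro j hj
    have hj' : j ≤ n := by simpa using Nat.lt_succ_iff.mp (Finset.mem_range.mp hj)
    have e0 : n + 1 - 1 - j = n - j := by omega
    have e1 : n - (n - j) = j := by omega
    have e2 : 2 * (n - j) + 1 = 2 * n + 1 - 2 * j := by omega
    have e3 : Nat.choose (2 * n + 1) (2 * n + 1 - 2 * j) = Nat.choose (2 * n + 1) (2 * j) :=
      Nat.choose_symm (by omega)
    rw [e0, e1, e2, e3]
  rw [refl1, eq_div_iff (by simp [hc0] : (2 : ℂ) * c ≠ 0)]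
  have expand : (c + I * s) ^ (2 * n + 1) + (c - I * s) ^ (2 * n + 1)
      = ∑ m ∈ range (2 * n + 1 + 1),
          ((I * s) ^ m + (-(I * s)) ^ m) * c ^ (2 * n + 1 - m) * (Nat.choose (2 * n + 1) m : ℂ) := by
    rw [show c + I * s = I * s + c by ring, show c - I * s = -(I * s) + c by ring,
      add_pow, add_pow, ← Finset.sum_add_distrib]
    exact Finset.sum_congr rfl fun m _ => by ring
  have e4 : 2 * n + 1 + 1 = 2 * (n + 1) := by ring
  rw [expand, e4, sum_range_two_mul', Finset.sum_mul]
  apply Finset.sum_congr rfl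
  intro k hk
  have hk' : k ≤ n := by simpa using Nat.lt_succ_iff.mp (Finset.mem_range.mp hk)
  have odd0 : ((I * s) ^ (2 * k + 1) + (-(I * s)) ^ (2 * k + 1)) = 0 := by
    rw [Odd.neg_pow ⟨k, by ring⟩]; ring
  have even1 : (-(I * s)) ^ (2 * k) = (I * s) ^ (2 * k) := Even.neg_pow ⟨k, by ring⟩ _
  have even2 : (I * s) ^ (2 * k) = (-1 : ℂ) ^ k * t ^ k := by
    rw [pow_mul]
    rw [show (I * s) ^ 2 = I ^ 2 * s ^ 2 by ring, Complex.I_sq, hs, ← neg_one_mul, mul_pow]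
  have e5 : 2 * n + 1 - 2 * k = 2 * (n - k) + 1 := by omega
  have e6 : c ^ (2 * (n - k) + 1) = (1 - t) ^ (n - k) * c := by
    rw [pow_succ, pow_mul, hc]
  rw [odd0, even1, even2, e5, e6]
  ring

open Complex in
lemma Sf_eq (t c s : ℂ) (hs : s ^ 2 = t) (hc : c ^ 2 = 1 - t) (hc0 : c ≠ 0) (n : ℕ) :
    Sf n t = ((c + I * s) ^ (2 * n + 1) + (c - I * s) ^ (2 * n + 1)) / (2 * c) := by
  have hxy : (c + I * s) * (c - I * s) = 1 := by
    linear_combination hc + hs - s ^ 2 * Complex.I_sq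
  have hx2 : (c + I * s) ^ 2 + (c - I * s) ^ 2 = 2 - 4 * t := by
    linear_combination 2 * hc - 2 * hs + 2 * s ^ 2 * Complex.I_sq
  have h2c : (2 : ℂ) * c ≠ 0 := by simp [hc0]
  have rec2 : ∀ j : ℕ, (c + I * s) ^ (2 * (j + 2) + 1) + (c - I * s) ^ (2 * (j + 2) + 1)
      = (2 - 4 * t) * ((c + I * s) ^ (2 * (j + 1) + 1) + (c - I * s) ^ (2 * (j + 1) + 1))
        - ((c + I * s) ^ (2 * j + 1) + (c - I * s) ^ (2 * j + 1)) := by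
    intro j
    linear_combination ((c + I * s) ^ (2 * j + 3) + (c - I * s) ^ (2 * j + 3)) * hx2
      - (((c + I * s) * (c - I * s) + 1) * ((c + I * s) ^ (2 * j + 1) + (c - I * s) ^ (2 * j + 1))) * hxy
  have base1 : Sf 0 t = 1 := by simp [Sf]
  have base2 : Sf 1 t = 1 - 4 * t := by
    rw [Sf, Finset.sum_range_succ, Finset.sum_range_succ, Finset.sum_range_zero]
    norm_num
    ring
  suffices h : ∀ m : ℕ,
      Sf m t = ((c + I * s) ^ (2 * m + 1) + (c - I * s) ^ (2 * m + 1)) / (2 * c) ∧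
      Sf (m + 1) t = ((c + I * s) ^ (2 * (m + 1) + 1) + (c - I * s) ^ (2 * (m + 1) + 1)) / (2 * c) by
    exact (h n).1
  intro m
  induction m with
  | zero =>
      constructor
      · rw [base1, eq_div_iff h2c]; norm_num; ring
      · rw [base2, eq_div_iff h2c]
        norm_num
        linear_combination (-2*c) * hc + (6*c) * hs - 6*c*s^2 * Complex.I_sq
  | succ m ih =>
      refine ⟨ih.2, ?_⟩
      rw [show m + 1 + 1 = m + 2 from rfl, Sf_rec, ih.1, ih.2, rec2 m]
      ring

theorem stmt_16 (n : ℕ) (t : ℂ) :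
    ∑ k ∈ range (n + 1), (-1 : ℂ) ^ k * 4 ^ k * (Nat.choose (n + k) (n - k) : ℂ) * t ^ k =
      ∑ k ∈ range (n + 1),
        (-1 : ℂ) ^ (n - k) * (Nat.choose (2 * n + 1) (2 * k + 1) : ℂ) * (1 - t) ^ k * t ^ (n - k) := by
  have lhs_eq : ∑ k ∈ range (n + 1), (-1 : ℂ) ^ k * 4 ^ k * (Nat.choose (n + k) (n - k) : ℂ) * t ^ k
      = Sf n t := by
    rw [Sf]
    apply Finset.sum_congr rfl
    intro k hk
    have hk' : k ≤ n := by simpa using Nat.lt_succ_iff.mp (Finset.mem_range.mp hk)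
    have e1 : n - k = (n + k) - 2 * k := by omega
    have e2 : Nat.choose (n + k) ((n + k) - 2 * k) = Nat.choose (n + k) (2 * k) :=
      Nat.choose_symm (by omega)
    rw [e1, e2, mul_pow, show ((-4 : ℂ)) ^ k = (-1 : ℂ) ^ k * 4 ^ k from by rw [neg_pow]]
    ring
  have key : ∀ u : ℂ, u ≠ 1 → Sf n u = Rf n u := by
    intro u hu
    obtain ⟨s, hs⟩ := IsAlgClosed.exists_pow_nat_eq u (n := 2) (by norm_num)
    obtain ⟨c, hc⟩ := IsAlgClosed.exists_pow_nat_eq (1 - u) (n := 2) (by norm_num)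
    have hc0 : c ≠ 0 := by
      intro h
      rw [h] at hc
      exact hu (by linear_combination hc)
    rw [Sf_eq u c s hs hc hc0 n, Rf_eq n u c s hs hc hc0]
  have contS : Continuous (Sf n) := by
    unfold Sf
    exact continuous_finset_sum _ fun k _ => by fun_prop
  have contR : Continuous (Rf n) := by
    unfold Rf
    exact continuous_finset_sum _ fun k _ => by fun_prop
  have funeq : Sf n = Rf n :=
    Continuous.ext_on (dense_compl_singleton (1 : ℂ)) contS contR fun u hu => key u hu
  rw [lhs_eq, funeq, Rf]
end

section
/- For every natural number n and all natural numbers r, s with 1 ≤ s ≤ r, ∑_{k=0}^{n} (−1)^k · 4^k · C(n+k, n−k) / ((k+s) · C(k+r, k+s)) = ∑_{k=0}^{n} (−1)^{n−k} · C(2n+1, 2k+1) / ((n−k+s) · C(n+r, n−k+s)), as an identity of real numbers. -/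
open Finset intervalIntegral

lemma betaNat (a b : ℕ) : ∫ x in (0:ℝ)..1, x^a*(1-x)^b
    = (Nat.factorial a * Nat.factorial b : ℝ) / (Nat.factorial (a+b+1)) := by
  induction b generalizing a with
  | zero =>
    simp only [pow_zero, mul_one, integral_pow, one_pow, ne_eq, Nat.add_eq_zero, and_false,
      not_false_eq_true, zero_pow, sub_zero, Nat.add_zero, Nat.factorial_succ, Nat.factorial_zero]
    rw [eq_div_iff (by positivity)]
    push_cast
    field_simp
    simp
  | succ b ih =>
    have key : ∀ x : ℝ, x^a*(1-x)^(b+1) = x^a*(1-x)^b - x^(a+1)*(1-x)^b := by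
      intro x; ring
    rw [intervalIntegral.integral_congr (g := fun x => x^a*(1-x)^b - x^(a+1)*(1-x)^b)
      (fun x _ => key x)]
    rw [intervalIntegral.integral_sub
      ((Continuous.intervalIntegrable (by continuity) 0 1))
      ((Continuous.intervalIntegrable (by continuity) 0 1))]
    rw [ih a, ih (a+1)]
    have h1 : (a+1+b+1 : ℕ) = (a+b+1)+1 := by ring
    have h2 : (a+(b+1)+1 : ℕ) = (a+b+1)+1 := by ring
    rw [h1, h2, Nat.factorial_succ (a+b+1), Nat.factorial_succ a, Nat.factorial_succ b]
    have hf : ((a+b+1).factorial : ℝ) ≠ 0 := Nat.cast_ne_zero.mpr (Nat.factorial_ne_zero _)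
    have hc : ((a+b+1+1 : ℕ) : ℝ) ≠ 0 := by positivity
    push_cast
    field_simp
    ring

private def Pp (n : ℕ) (x : ℝ) : ℝ :=
  ∑ k ∈ range (n+1), (-1:ℝ)^k * 4^k * ((n+k).choose (2*k)) * x^k
private def Gg (n : ℕ) (x : ℝ) : ℝ :=
  ∑ k ∈ range (n+1), (-1:ℝ)^k * 4^k * (((n+k).choose (2*k+1) + (n+k+1).choose (2*k+1) : ℕ)) * x^k
private def Rr (n : ℕ) (x : ℝ) : ℝ :=
  ∑ k ∈ range (n+1), (-1:ℝ)^k * ((2*n+1).choose (2*k)) * x^k * (1-x)^(n-k)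
private def Sg (n : ℕ) (x : ℝ) : ℝ :=
  ∑ k ∈ range (n+1), (-1:ℝ)^k * ((2*n+1).choose (2*k+1)) * x^k * (1-x)^(n-k)

private lemma shift_ext (f : ℕ → ℝ) (n : ℕ) (h : f (n+1) = 0) :
    ∑ k ∈ range (n+1), f k = f 0 + ∑ k ∈ range (n+1), f (k+1) := by
  rw [Finset.sum_range_succ (fun k => f (k+1)) n, h, add_zero, Finset.sum_range_succ', add_comm]

private lemma recP (n : ℕ) (x : ℝ) :
    Pp (n+1) x = (1-2*x) * Pp n x - 2*x * Gg n x := by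
  have hq : (1-2*x) * Pp n x - 2*x * Gg n x =
      ∑ k ∈ range (n+1), ((-1:ℝ)^k * 4^k * ((n+k).choose (2*k)) * x^k
        + (-1:ℝ)^(k+1) * 4^(k+1) * ((n+k+1).choose (2*k+1)) * x^(k+1)) := by
    rw [Pp, Gg, Finset.mul_sum, Finset.mul_sum, ← Finset.sum_sub_distrib]
    refine Finset.sum_congr rfl fun k _ => ?_
    have h1 : (n+k+1).choose (2*k+1) = (n+k).choose (2*k) + (n+k).choose (2*k+1) :=
      Nat.choose_succ_succ' (n+k) (2*k)
    rw [h1]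
    push_cast
    ring
  rw [hq, Finset.sum_add_distrib, Pp, Finset.sum_range_succ']
  have hext : ∑ k ∈ range (n+1), (-1:ℝ)^k * 4^k * ((n+k).choose (2*k)) * x^k
      = (-1:ℝ)^0 * 4^0 * ((n+0).choose 0) * x^0
        + ∑ k ∈ range (n+1), (-1:ℝ)^(k+1) * 4^(k+1) * ((n+(k+1)).choose (2*(k+1))) * x^(k+1) := by
    refine shift_ext _ n ?_
    have : (n+(n+1)).choose (2*(n+1)) = 0 := Nat.choose_eq_zero_of_lt (by omega)
    simp [this]
  rw [hext]
  have hterm : ∀ k ∈ range (n+1),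
      (-1:ℝ)^(k+1) * 4^(k+1) * ((n+1+(k+1)).choose (2*(k+1))) * x^(k+1)
      = ((-1:ℝ)^(k+1) * 4^(k+1) * ((n+k+1).choose (2*k+1)) * x^(k+1)
        + (-1:ℝ)^(k+1) * 4^(k+1) * ((n+(k+1)).choose (2*(k+1))) * x^(k+1)) := by
    intro k _
    have h1 : (n+1+(k+1)).choose (2*(k+1)) = (n+k+1).choose (2*k+1) + (n+k+1).choose (2*k+2) := by
      have := Nat.choose_succ_succ (n+k+1) (2*k+1)
      convert this using 2 <;> omega
    rw [h1]
    have e1 : n + (k+1) = n+k+1 := by ring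
    have e2 : 2*(k+1) = 2*k+2 := by ring
    rw [e1, e2]
    push_cast
    ring
  rw [Finset.sum_congr rfl hterm, Finset.sum_add_distrib]
  simp
  ring

private lemma pascal (m j : ℕ) : (m+1).choose (j+1) = m.choose j + m.choose (j+1) :=
  Nat.choose_succ_succ' m j

private lemma recG (n : ℕ) (x : ℝ) :
    Gg (n+1) x = (1-2*x) * Gg n x + 2*(1-x) * Pp n x := by
  have hq : (1-2*x) * Gg n x + 2*(1-x) * Pp n x =
      ∑ k ∈ range (n+1), ((-1:ℝ)^k * 4^k * (((n+k).choose (2*k+1) + (n+k+1).choose (2*k+1) : ℕ)) * x^k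
        + 2 * ((-1:ℝ)^k * 4^k * ((n+k).choose (2*k)) * x^k)
        + (-1:ℝ)^(k+1) * 4^(k+1) * ((n+k+1).choose (2*k+1)) * x^(k+1)) := by
    rw [Gg, Pp, Finset.mul_sum, Finset.mul_sum, ← Finset.sum_add_distrib]
    refine Finset.sum_congr rfl fun k _ => ?_
    have h1 : (n+k+1).choose (2*k+1) = (n+k).choose (2*k) + (n+k).choose (2*k+1) :=
      pascal (n+k) (2*k)
    rw [h1]
    push_cast
    ring
  rw [hq]
  have split : ∀ k, ((-1:ℝ)^k * 4^k * (((n+k).choose (2*k+1) + (n+k+1).choose (2*k+1) : ℕ)) * x^k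
        + 2 * ((-1:ℝ)^k * 4^k * ((n+k).choose (2*k)) * x^k)
        + (-1:ℝ)^(k+1) * 4^(k+1) * ((n+k+1).choose (2*k+1)) * x^(k+1))
      = ((-1:ℝ)^k * 4^k * (((n+k).choose (2*k+1) + (n+k+1).choose (2*k+1) : ℕ)) * x^k
        + 2 * ((-1:ℝ)^k * 4^k * ((n+k).choose (2*k)) * x^k))
        + (-1:ℝ)^(k+1) * 4^(k+1) * ((n+k+1).choose (2*k+1)) * x^(k+1) := fun k => by ring
  rw [Finset.sum_congr rfl (fun k _ => split k), Finset.sum_add_distrib, Finset.sum_add_distrib]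
  have hext1 : ∑ k ∈ range (n+1), (-1:ℝ)^k * 4^k * (((n+k).choose (2*k+1) + (n+k+1).choose (2*k+1) : ℕ)) * x^k
      = (-1:ℝ)^0 * 4^0 * (((n+0).choose 1 + (n+1).choose 1 : ℕ)) * x^0
        + ∑ k ∈ range (n+1), (-1:ℝ)^(k+1) * 4^(k+1) * (((n+(k+1)).choose (2*(k+1)+1) + (n+(k+1)+1).choose (2*(k+1)+1) : ℕ)) * x^(k+1) := by
    refine shift_ext _ n ?_
    have h1 : (n+(n+1)).choose (2*(n+1)+1) = 0 := Nat.choose_eq_zero_of_lt (by omega)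
    have h2 : (n+(n+1)+1).choose (2*(n+1)+1) = 0 := Nat.choose_eq_zero_of_lt (by omega)
    simp [h1, h2]
  have hext2 : ∑ k ∈ range (n+1), 2 * ((-1:ℝ)^k * 4^k * ((n+k).choose (2*k)) * x^k)
      = 2 * ((-1:ℝ)^0 * 4^0 * ((n+0).choose 0) * x^0)
        + ∑ k ∈ range (n+1), 2 * ((-1:ℝ)^(k+1) * 4^(k+1) * ((n+(k+1)).choose (2*(k+1))) * x^(k+1)) := by
    refine shift_ext _ n ?_
    have h1 : (n+(n+1)).choose (2*(n+1)) = 0 := Nat.choose_eq_zero_of_lt (by omega)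
    simp [h1]
  rw [hext1, hext2, Gg, Finset.sum_range_succ']
  have hterm : ∀ k ∈ range (n+1),
      (-1:ℝ)^(k+1) * 4^(k+1) * (((n+1+(k+1)).choose (2*(k+1)+1) + (n+1+(k+1)+1).choose (2*(k+1)+1) : ℕ)) * x^(k+1)
      = (-1:ℝ)^(k+1) * 4^(k+1) * (((n+(k+1)).choose (2*(k+1)+1) + (n+(k+1)+1).choose (2*(k+1)+1) : ℕ)) * x^(k+1)
        + 2 * ((-1:ℝ)^(k+1) * 4^(k+1) * ((n+(k+1)).choose (2*(k+1))) * x^(k+1))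
        + (-1:ℝ)^(k+1) * 4^(k+1) * ((n+k+1).choose (2*k+1)) * x^(k+1) := by
    intro k _
    have h1 : (n+1+(k+1)+1).choose (2*(k+1)+1)
        = (n+(k+1)+1).choose (2*(k+1)) + (n+(k+1)+1).choose (2*(k+1)+1) := by
      have := pascal (n+(k+1)+1) (2*(k+1))
      convert this using 2 <;> omega
    have h2 : (n+(k+1)+1).choose (2*(k+1))
        = (n+(k+1)).choose (2*k+1) + (n+(k+1)).choose (2*(k+1)) := by
      have := pascal (n+(k+1)) (2*k+1)
      rw [show 2*(k+1) = 2*k+1+1 by ring]; exact this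
    have h3 : (n+1+(k+1)).choose (2*(k+1)+1)
        = (n+(k+1)).choose (2*(k+1)) + (n+(k+1)).choose (2*(k+1)+1) := by
      have := pascal (n+(k+1)) (2*(k+1))
      convert this using 2 <;> omega
    have e1 : n + (k+1) = n+k+1 := by ring
    rw [h1, h2, h3, e1]
    push_cast
    ring
  rw [Finset.sum_congr rfl hterm]
  rw [show ∀ a b c : ℕ → ℝ, ∑ k ∈ range (n+1), (a k + b k + c k)
      = ∑ k ∈ range (n+1), a k + ∑ k ∈ range (n+1), b k + ∑ k ∈ range (n+1), c k
    from fun a b c => by rw [Finset.sum_add_distrib, Finset.sum_add_distrib]]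
  have hc : ((n+1+0).choose 1 : ℝ) + ((n+1+0+1).choose 1 : ℝ)
      = (((n+0).choose 1 + (n+1).choose 1 : ℕ) : ℝ) + 2 * ((n+0).choose 0 : ℝ) := by
    simp [Nat.choose_one_right]
    push_cast
    try ring
  simp only [pow_zero, one_mul, mul_one]
  push_cast at hc ⊢
  linarith [hc]

private lemma recR (n : ℕ) (x : ℝ) :
    Rr (n+1) x = (1-2*x) * Rr n x - 2*x * Sg n x := by
  have hq : (1-2*x) * Rr n x - 2*x * Sg n x =
      ∑ k ∈ range (n+1), ((-1:ℝ)^k * ((2*n+1).choose (2*k)) * x^k * (1-x)^(n+1-k)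
        - ((-1:ℝ)^k * ((2*n+1).choose (2*k)) + 2 * ((-1:ℝ)^k * ((2*n+1).choose (2*k+1)))) * x^(k+1) * (1-x)^(n-k)) := by
    rw [Rr, Sg, Finset.mul_sum, Finset.mul_sum, ← Finset.sum_sub_distrib]
    refine Finset.sum_congr rfl fun k hk => ?_
    have hk' : k ≤ n := by simpa using Nat.lt_succ_iff.mp (Finset.mem_range.mp hk)
    have e : n+1-k = (n-k)+1 := by omega
    rw [e, pow_succ]
    ring
  rw [hq, Finset.sum_sub_distrib]
  have hext : ∑ k ∈ range (n+1), (-1:ℝ)^k * ((2*n+1).choose (2*k)) * x^k * (1-x)^(n+1-k)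
      = (-1:ℝ)^0 * ((2*n+1).choose 0) * x^0 * (1-x)^(n+1)
        + ∑ k ∈ range (n+1), (-1:ℝ)^(k+1) * ((2*n+1).choose (2*(k+1))) * x^(k+1) * (1-x)^(n+1-(k+1)) := by
    refine shift_ext (fun k => (-1:ℝ)^k * ((2*n+1).choose (2*k)) * x^k * (1-x)^(n+1-k)) n ?_
    have h1 : (2*n+1).choose (2*(n+1)) = 0 := Nat.choose_eq_zero_of_lt (by omega)
    simp [h1]
  rw [hext, Rr, Finset.sum_range_succ']
  have hterm : ∀ k ∈ range (n+1),
      (-1:ℝ)^(k+1) * ((2*(n+1)+1).choose (2*(k+1))) * x^(k+1) * (1-x)^(n+1-(k+1))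
      = (-1:ℝ)^(k+1) * ((2*n+1).choose (2*(k+1))) * x^(k+1) * (1-x)^(n+1-(k+1))
        - ((-1:ℝ)^k * ((2*n+1).choose (2*k)) + 2 * ((-1:ℝ)^k * ((2*n+1).choose (2*k+1)))) * x^(k+1) * (1-x)^(n-k) := by
    intro k _
    have h1 : (2*(n+1)+1).choose (2*(k+1))
        = (2*n+1).choose (2*(k+1)) + ((2*n+1).choose (2*k) + 2 * (2*n+1).choose (2*k+1)) := by
      have p1 : (2*n+2).choose (2*k+2) = (2*n+1).choose (2*k+1) + (2*n+1).choose (2*k+2) :=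
        pascal (2*n+1) (2*k+1)
      have p2 : (2*n+2).choose (2*k+1) = (2*n+1).choose (2*k) + (2*n+1).choose (2*k+1) :=
        pascal (2*n+1) (2*k)
      have p3 : (2*n+3).choose (2*k+2) = (2*n+2).choose (2*k+1) + (2*n+2).choose (2*k+2) :=
        pascal (2*n+2) (2*k+1)
      have e1 : 2*(n+1)+1 = 2*n+3 := by ring
      have e2 : 2*(k+1) = 2*k+2 := by ring
      rw [e1, e2, p3, p1, p2]
      omega
    have e3 : n+1-(k+1) = n-k := by omega
    rw [h1, e3]
    push_cast
    ring
  rw [Finset.sum_congr rfl hterm, Finset.sum_sub_distrib]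
  simp
  ring

private lemma recSg (n : ℕ) (x : ℝ) :
    Sg (n+1) x = (1-2*x) * Sg n x + 2*(1-x) * Rr n x := by
  have hq : (1-2*x) * Sg n x + 2*(1-x) * Rr n x =
      ∑ k ∈ range (n+1), (((-1:ℝ)^k * ((2*n+1).choose (2*k+1)) + 2 * ((-1:ℝ)^k * ((2*n+1).choose (2*k)))) * x^k * (1-x)^(n+1-k)
        - (-1:ℝ)^k * ((2*n+1).choose (2*k+1)) * x^(k+1) * (1-x)^(n-k)) := by
    rw [Rr, Sg, Finset.mul_sum, Finset.mul_sum, ← Finset.sum_add_distrib]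
    refine Finset.sum_congr rfl fun k hk => ?_
    have hk' : k ≤ n := by simpa using Nat.lt_succ_iff.mp (Finset.mem_range.mp hk)
    have e : n+1-k = (n-k)+1 := by omega
    rw [e, pow_succ]
    ring
  rw [hq, Finset.sum_sub_distrib]
  have hext : ∑ k ∈ range (n+1), ((-1:ℝ)^k * ((2*n+1).choose (2*k+1)) + 2 * ((-1:ℝ)^k * ((2*n+1).choose (2*k)))) * x^k * (1-x)^(n+1-k)
      = ((-1:ℝ)^0 * ((2*n+1).choose 1) + 2 * ((-1:ℝ)^0 * ((2*n+1).choose 0))) * x^0 * (1-x)^(n+1)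
        + ∑ k ∈ range (n+1), ((-1:ℝ)^(k+1) * ((2*n+1).choose (2*(k+1)+1)) + 2 * ((-1:ℝ)^(k+1) * ((2*n+1).choose (2*(k+1))))) * x^(k+1) * (1-x)^(n+1-(k+1)) := by
    refine shift_ext (fun k => ((-1:ℝ)^k * ((2*n+1).choose (2*k+1)) + 2 * ((-1:ℝ)^k * ((2*n+1).choose (2*k)))) * x^k * (1-x)^(n+1-k)) n ?_
    have h1 : (2*n+1).choose (2*(n+1)) = 0 := Nat.choose_eq_zero_of_lt (by omega)
    have h2 : (2*n+1).choose (2*(n+1)+1) = 0 := Nat.choose_eq_zero_of_lt (by omega)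
    simp [h1, h2]
  rw [hext, Sg, Finset.sum_range_succ']
  have hterm : ∀ k ∈ range (n+1),
      (-1:ℝ)^(k+1) * ((2*(n+1)+1).choose (2*(k+1)+1)) * x^(k+1) * (1-x)^(n+1-(k+1))
      = ((-1:ℝ)^(k+1) * ((2*n+1).choose (2*(k+1)+1)) + 2 * ((-1:ℝ)^(k+1) * ((2*n+1).choose (2*(k+1))))) * x^(k+1) * (1-x)^(n+1-(k+1))
        - (-1:ℝ)^k * ((2*n+1).choose (2*k+1)) * x^(k+1) * (1-x)^(n-k) := by
    intro k _
    have h1 : (2*(n+1)+1).choose (2*(k+1)+1)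
        = ((2*n+1).choose (2*(k+1)+1) + 2 * (2*n+1).choose (2*(k+1))) + (2*n+1).choose (2*k+1) := by
      have p1 : (2*n+2).choose (2*k+3) = (2*n+1).choose (2*k+2) + (2*n+1).choose (2*k+3) :=
        pascal (2*n+1) (2*k+2)
      have p2 : (2*n+2).choose (2*k+2) = (2*n+1).choose (2*k+1) + (2*n+1).choose (2*k+2) :=
        pascal (2*n+1) (2*k+1)
      have p3 : (2*n+3).choose (2*k+3) = (2*n+2).choose (2*k+2) + (2*n+2).choose (2*k+3) :=
        pascal (2*n+2) (2*k+2)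
      have e1 : 2*(n+1)+1 = 2*n+3 := by ring
      have e2 : 2*(k+1)+1 = 2*k+3 := by ring
      have e4 : 2*(k+1) = 2*k+2 := by ring
      rw [e1, e2, e4, p3, p1, p2]
      omega
    have e3 : n+1-(k+1) = n-k := by omega
    rw [h1, e3]
    push_cast
    ring
  rw [Finset.sum_congr rfl hterm, Finset.sum_sub_distrib]
  simp [Nat.choose_one_right]
  push_cast
  ring

private lemma PR (n : ℕ) (x : ℝ) : Pp n x = Rr n x ∧ Gg n x = Sg n x := by
  induction n with
  | zero =>
    constructor <;> simp [Pp, Rr, Gg, Sg]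
  | succ n ih =>
    obtain ⟨h1, h2⟩ := ih
    constructor
    · rw [recP, recR, h1, h2]
    · rw [recG, recSg, h1, h2]

/-- key polynomial identity -/
private lemma keyPoly (n : ℕ) (x : ℝ) :
    ∑ k ∈ range (n+1), (-1:ℝ)^k * 4^k * ((n+k).choose (n-k)) * x^k
      = ∑ k ∈ range (n+1), (-1:ℝ)^(n-k) * ((2*n+1).choose (2*k+1)) * x^(n-k) * (1-x)^k := by
  have hL : ∑ k ∈ range (n+1), (-1:ℝ)^k * 4^k * ((n+k).choose (n-k)) * x^k = Pp n x := by
    refine Finset.sum_congr rfl fun k hk => ?_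
    have hk' : k ≤ n := by simpa using Nat.lt_succ_iff.mp (Finset.mem_range.mp hk)
    have : (n+k).choose (n-k) = (n+k).choose (2*k) :=
      Nat.choose_symm_of_eq_add (by omega)
    rw [this]
  have hR : ∑ k ∈ range (n+1), (-1:ℝ)^(n-k) * ((2*n+1).choose (2*k+1)) * x^(n-k) * (1-x)^k
      = Rr n x := by
    rw [← Finset.sum_range_reflect]
    refine Finset.sum_congr rfl fun k hk => ?_
    have hk' : k ≤ n := by simpa using Nat.lt_succ_iff.mp (Finset.mem_range.mp hk)
    simp only [Nat.add_sub_cancel]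
    have e1 : n - (n - k) = k := by omega
    have e2 : (2*n+1).choose (2*(n-k)+1) = (2*n+1).choose (2*k) :=
      Nat.choose_symm_of_eq_add (by omega)
    rw [e1, e2]
  rw [hL, hR, (PR n x).1]


private lemma invDenom (m b : ℕ) :
    ((((m+1 : ℕ) : ℝ)) * (((m+1+b).choose (m+1) : ℕ) : ℝ))⁻¹
      = ∫ x in (0:ℝ)..1, x^m*(1-x)^b := by
  have h := Nat.choose_mul_factorial_mul_factorial (show m+1 ≤ m+1+b by omega)
  have e : m+1+b-(m+1) = b := by omega
  rw [e] at h
  have hnat : (m+1) * ((m+1+b).choose (m+1)) * (m.factorial * b.factorial)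
      = (m+1+b).factorial := by
    rw [← h, Nat.factorial_succ]; ring
  rw [betaNat]
  have e2 : m+b+1 = m+1+b := by omega
  rw [e2]
  have hA : (0:ℝ) < ((m+1:ℕ):ℝ) * (((m+1+b).choose (m+1) : ℕ) : ℝ) := by
    have h1 := Nat.choose_pos (show m+1 ≤ m+1+b by omega)
    have : (0:ℝ) < (((m+1+b).choose (m+1) : ℕ) : ℝ) := by exact_mod_cast h1
    positivity
  have hZ : (0:ℝ) < ((m+1+b).factorial : ℝ) := by
    exact_mod_cast (m+1+b).factorial_pos
  rw [inv_eq_one_div, div_eq_div_iff hA.ne' hZ.ne']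
  rw [← hnat]
  push_cast
  ring

theorem stmt_17 (n : ℕ) (r s : ℕ) (hs : 1 ≤ s) (hsr : s ≤ r) :
    ∑ k ∈ range (n + 1),
        (-1 : ℝ) ^ k * 4 ^ k * (Nat.choose (n + k) (n - k) : ℝ) /
          (((k : ℝ) + s) * (Nat.choose (k + r) (k + s) : ℝ)) =
      ∑ k ∈ range (n + 1),
        (-1 : ℝ) ^ (n - k) * (Nat.choose (2 * n + 1) (2 * k + 1) : ℝ) /
          (((n : ℝ) - (k : ℝ) + s) * (Nat.choose (n + r) (n - k + s) : ℝ)) := by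
  obtain ⟨a, rfl⟩ : ∃ a, s = a+1 := ⟨s-1, by omega⟩
  obtain ⟨b, rfl⟩ : ∃ b, r = a+1+b := ⟨r-(a+1), by omega⟩
  have hL : ∑ k ∈ range (n + 1),
        (-1 : ℝ) ^ k * 4 ^ k * (Nat.choose (n + k) (n - k) : ℝ) /
          (((k : ℝ) + (a+1:ℕ)) * (Nat.choose (k + (a+1+b)) (k + (a+1)) : ℝ))
      = ∫ x in (0:ℝ)..1, x^a*(1-x)^b *
          (∑ k ∈ range (n + 1), (-1:ℝ)^k * 4^k * ((n+k).choose (n-k)) * x^k) := by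
    have step1 : ∀ k ∈ range (n+1),
        (-1 : ℝ) ^ k * 4 ^ k * (Nat.choose (n + k) (n - k) : ℝ) /
          (((k : ℝ) + (a+1:ℕ)) * (Nat.choose (k + (a+1+b)) (k + (a+1)) : ℝ))
        = ∫ x in (0:ℝ)..1,
            (-1:ℝ)^k * 4^k * ((n+k).choose (n-k)) * (x^(k+a)*(1-x)^b) := by
      intro k _
      have e1 : k + (a+1+b) = (k+a)+1+b := by omega
      have e2 : k + (a+1) = (k+a)+1 := by omega
      have e3 : ((k : ℝ) + (a+1:ℕ)) = (((k+a)+1 : ℕ) : ℝ) := by push_cast; ring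
      rw [e1, e2, e3, div_eq_mul_inv, invDenom (k+a) b, ← intervalIntegral.integral_const_mul]
    rw [Finset.sum_congr rfl step1,
      ← intervalIntegral.integral_finset_sum
        (fun k _ => (Continuous.intervalIntegrable (by fun_prop) 0 1))]
    apply intervalIntegral.integral_congr
    intro x _
    dsimp only
    rw [Finset.mul_sum]
    refine Finset.sum_congr rfl fun k _ => ?_
    rw [pow_add]
    ring
  have hR : ∑ k ∈ range (n + 1),
        (-1 : ℝ) ^ (n - k) * (Nat.choose (2 * n + 1) (2 * k + 1) : ℝ) /
          (((n : ℝ) - (k : ℝ) + (a+1:ℕ)) * (Nat.choose (n + (a+1+b)) (n - k + (a+1)) : ℝ))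
      = ∫ x in (0:ℝ)..1, x^a*(1-x)^b *
          (∑ k ∈ range (n + 1), (-1:ℝ)^(n-k) * ((2*n+1).choose (2*k+1)) * x^(n-k) * (1-x)^k) := by
    have step1 : ∀ k ∈ range (n+1),
        (-1 : ℝ) ^ (n - k) * (Nat.choose (2 * n + 1) (2 * k + 1) : ℝ) /
          (((n : ℝ) - (k : ℝ) + (a+1:ℕ)) * (Nat.choose (n + (a+1+b)) (n - k + (a+1)) : ℝ))
        = ∫ x in (0:ℝ)..1,
            (-1:ℝ)^(n-k) * ((2*n+1).choose (2*k+1)) * (x^((n-k)+a)*(1-x)^(k+b)) := by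
      intro k hk
      have hk' : k ≤ n := by simpa using Nat.lt_succ_iff.mp (Finset.mem_range.mp hk)
      have e1 : n + (a+1+b) = ((n-k)+a)+1+(k+b) := by omega
      have e2 : n - k + (a+1) = ((n-k)+a)+1 := by omega
      have e3 : ((n : ℝ) - (k : ℝ) + (a+1:ℕ)) = ((((n-k)+a)+1 : ℕ) : ℝ) := by
        push_cast [Nat.cast_sub hk']; ring
      rw [e1, e2, e3, div_eq_mul_inv, invDenom ((n-k)+a) (k+b),
        ← intervalIntegral.integral_const_mul]
    rw [Finset.sum_congr rfl step1,
      ← intervalIntegral.integral_finset_sum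
        (fun k _ => (Continuous.intervalIntegrable (by fun_prop) 0 1))]
    apply intervalIntegral.integral_congr
    intro x _
    dsimp only
    rw [Finset.mul_sum]
    refine Finset.sum_congr rfl fun k _ => ?_
    rw [pow_add, pow_add]
    ring
  rw [hL, hR]
  apply intervalIntegral.integral_congr
  intro x _
  dsimp only
  rw [keyPoly]
end

section
/- For every natural number n ≥ 1, ∑_{k=0}^{n} (−1)^{n−k} · C(2n+1, 2k+1) / C(n, k) = ((−1)^n · (2n+1) − 1) / (2n), as an identity of real numbers. -/
open Finset

lemma aux_choose (n k : ℕ) (h : k < n) :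
    (2 * n + 1).choose (2 * k + 1) * n.choose (k + 1) =
      (2 * n + 1).choose (2 * k + 2) * n.choose k := by
  have h1 := Nat.choose_succ_right_eq n k
  have h2 := Nat.choose_succ_right_eq (2 * n + 1) (2 * k + 1)
  rw [show 2 * k + 1 + 1 = 2 * k + 2 by omega,
      show 2 * n + 1 - (2 * k + 1) = 2 * (n - k) by omega] at h2
  apply Nat.eq_of_mul_eq_mul_left (show 0 < 2 * k + 2 by omega)
  calc (2 * k + 2) * ((2 * n + 1).choose (2 * k + 1) * n.choose (k + 1))
      = 2 * ((2 * n + 1).choose (2 * k + 1) * (n.choose (k + 1) * (k + 1))) := by ring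
    _ = 2 * ((2 * n + 1).choose (2 * k + 1) * (n.choose k * (n - k))) := by rw [h1]
    _ = ((2 * n + 1).choose (2 * k + 1) * (2 * (n - k))) * n.choose k := by ring
    _ = ((2 * n + 1).choose (2 * k + 2) * (2 * k + 2)) * n.choose k := by rw [h2]
    _ = (2 * k + 2) * ((2 * n + 1).choose (2 * k + 2) * n.choose k) := by ring

lemma aux_key (n k : ℕ) (h : k < n) :
    (2 * (n - k) - 1) * ((2 * n + 1).choose (2 * k + 1) * n.choose (k + 1)) =
      (2 * k + 3) * ((2 * n + 1).choose (2 * k + 3) * n.choose k) := by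
  have h2 := Nat.choose_succ_right_eq (2 * n + 1) (2 * k + 2)
  rw [show 2 * k + 2 + 1 = 2 * k + 3 by omega,
      show 2 * n + 1 - (2 * k + 2) = 2 * (n - k) - 1 by omega] at h2
  rw [aux_choose n k h]
  calc (2 * (n - k) - 1) * ((2 * n + 1).choose (2 * k + 2) * n.choose k)
      = ((2 * n + 1).choose (2 * k + 2) * (2 * (n - k) - 1)) * n.choose k := by ring
    _ = ((2 * n + 1).choose (2 * k + 3) * (2 * k + 3)) * n.choose k := by rw [h2]
    _ = (2 * k + 3) * ((2 * n + 1).choose (2 * k + 3) * n.choose k) := by ring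

theorem stmt_18 (n : ℕ) (hn : 1 ≤ n) :
    ∑ k ∈ range (n + 1),
        (-1 : ℝ) ^ (n - k) * (Nat.choose (2 * n + 1) (2 * k + 1) : ℝ) / (Nat.choose n k : ℝ) =
      ((-1 : ℝ) ^ n * (2 * (n : ℝ) + 1) - 1) / (2 * (n : ℝ)) := by
  have hn0 : (n : ℝ) ≠ 0 := Nat.cast_ne_zero.mpr (by omega)
  set f : ℕ → ℝ := fun k =>
    if k ≤ n then
      -((2 * (k : ℝ) + 1) / (2 * (n : ℝ))) *
        ((-1 : ℝ) ^ (n - k) * (Nat.choose (2 * n + 1) (2 * k + 1) : ℝ) / (Nat.choose n k : ℝ))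
    else -1 / (2 * (n : ℝ)) with hf
  have hstep : ∀ k ∈ range (n + 1),
      (-1 : ℝ) ^ (n - k) * (Nat.choose (2 * n + 1) (2 * k + 1) : ℝ) / (Nat.choose n k : ℝ) =
        f (k + 1) - f k := by
    intro k hk
    simp only [mem_range] at hk
    have hkn : k ≤ n := by omega
    by_cases hlt : k < n
    · simp only [hf, if_pos (by omega : k + 1 ≤ n), if_pos hkn]
      have hB : (n.choose k : ℝ) ≠ 0 := Nat.cast_ne_zero.mpr (Nat.choose_pos hkn).ne'
      have hB1 : (n.choose (k + 1) : ℝ) ≠ 0 := Nat.cast_ne_zero.mpr (Nat.choose_pos hlt).ne'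
      have hsub : n - k = (n - (k + 1)) + 1 := by omega
      have keyR : (2 * (n : ℝ) - 2 * (k : ℝ) - 1) *
            (((2 * n + 1).choose (2 * k + 1) : ℝ) * (n.choose (k + 1) : ℝ)) =
          (2 * (k : ℝ) + 3) * (((2 * n + 1).choose (2 * k + 3) : ℝ) * (n.choose k : ℝ)) := by
        have key := aux_key n k hlt
        have hle1 : (1 : ℕ) ≤ 2 * (n - k) := by omega
        have := congrArg (Nat.cast : ℕ → ℝ) key
        push_cast [Nat.cast_sub hle1, Nat.cast_sub hkn] at this
        linarith [this]
      obtain ⟨s, hs⟩ : ∃ s : ℝ, (-1 : ℝ) ^ (n - (k + 1)) = s := ⟨_, rfl⟩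
      rw [show 2 * (k + 1) + 1 = 2 * k + 3 by omega, hsub, pow_succ, hs]
      push_cast
      field_simp
      linear_combination (-s) * keyR
    · have hke : k = n := by omega
      subst hke
      simp only [hf, if_neg (by omega : ¬ k + 1 ≤ k), if_pos le_rfl]
      rw [Nat.sub_self]
      simp only [Nat.choose_self, Nat.cast_one, pow_zero]
      field_simp
      ring
  rw [Finset.sum_congr rfl hstep, Finset.sum_range_sub f]
  simp only [hf, if_neg (by omega : ¬ n + 1 ≤ n), if_pos (Nat.zero_le n)]
  simp [Nat.choose_one_right]
  field_simp
  ring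
end

section
/- For every natural number n, ∑_{k=0}^{n} (−1)^k · (4^k / (2k+1)) · (C(n,k) / C(2k,k)) = 1/(2n+1), as an identity of real numbers. -/
open Finset

private noncomputable def tterm (n k : ℕ) : ℝ :=
  (-1 : ℝ) ^ k * (4 ^ k / (2 * (k : ℝ) + 1)) *
    ((Nat.choose n k : ℝ) / (Nat.choose (2 * k) k : ℝ))

private noncomputable def gfun (n k : ℕ) : ℝ :=
  if k = 0 then 0 else (-1 : ℝ) ^ (k - 1) * 4 ^ k * (Nat.choose n (k - 1) : ℝ) /
    (Nat.choose (2 * k) k : ℝ)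

private lemma cb_ne (k : ℕ) : ((Nat.choose (2 * k) k : ℝ)) ≠ 0 := by
  have : 0 < Nat.choose (2 * k) k := Nat.choose_pos (by omega)
  exact_mod_cast this.ne'

private lemma cb_rec (j : ℕ) :
    ((j : ℝ) + 2) * (Nat.choose (2 * (j + 2)) (j + 2) : ℝ) =
      2 * (2 * (j : ℝ) + 3) * (Nat.choose (2 * (j + 1)) (j + 1) : ℝ) := by
  have h := Nat.succ_mul_centralBinom_succ (j + 1)
  have h' : (j + 2) * Nat.choose (2 * (j + 2)) (j + 2)
      = 2 * (2 * j + 3) * Nat.choose (2 * (j + 1)) (j + 1) := by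
    simpa [Nat.centralBinom, Nat.succ_eq_add_one, show j + 1 + 1 = j + 2 from rfl,
      show 2 * (j + 1) + 1 = 2 * j + 3 by ring] using h
  exact_mod_cast h'

/-- WZ certificate step -/
private lemma step (n k : ℕ) :
    (2 * (n : ℝ) + 3) * tterm (n + 1) k - (2 * (n : ℝ) + 1) * tterm n k =
      gfun n (k + 1) - gfun n k := by
  rcases k with _ | j
  · simp only [tterm, gfun, if_pos rfl, if_neg one_ne_zero]
    norm_num [Nat.choose]
  · have hc : ((Nat.choose (2 * (j + 1)) (j + 1) : ℝ)) ≠ 0 := cb_ne (j + 1)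
    have hc2 : ((Nat.choose (2 * (j + 2)) (j + 2) : ℝ)) ≠ 0 := cb_ne (j + 2)
    have h2 := cb_rec j
    have hpascal : ((Nat.choose (n + 1) (j + 1) : ℝ)) =
        (Nat.choose n j : ℝ) + (Nat.choose n (j + 1) : ℝ) := by
      rw [Nat.choose_succ_succ]; push_cast; ring
    simp only [tterm, gfun, if_neg (Nat.succ_ne_zero _), if_neg (Nat.succ_ne_zero _),
      Nat.add_sub_cancel]
    rw [hpascal]
    push_cast
    rcases le_or_gt j n with hjn | hjn
    · have h3 : ((Nat.choose n (j + 1) : ℝ)) =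
          (Nat.choose n j : ℝ) * ((n : ℝ) - (j : ℝ)) / ((j : ℝ) + 1) := by
        have hh := Nat.choose_succ_right_eq n j
        have hcast : ((Nat.choose n (j+1)) : ℝ) * ((j:ℝ)+1)
            = (Nat.choose n j : ℝ) * ((n - j : ℕ) : ℝ) := by exact_mod_cast hh
        rw [Nat.cast_sub hjn] at hcast
        field_simp
        linarith [hcast]
      have hc2' : ((Nat.choose (2 * (j + 2)) (j + 2) : ℝ)) =
          2 * (2 * (j : ℝ) + 3) * (Nat.choose (2 * (j + 1)) (j + 1) : ℝ) / ((j : ℝ) + 2) := by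
        field_simp
        linarith [h2]
      rw [h3, hc2']
      have hj1 : ((j : ℝ) + 1) ≠ 0 := by positivity
      have hj2 : ((j : ℝ) + 2) ≠ 0 := by positivity
      have hj3 : (2 * (j : ℝ) + 3) ≠ 0 := by positivity
      simp only [pow_succ]
      field_simp
      ring
    · have ha : (Nat.choose n j : ℝ) = 0 := by
        rw [Nat.choose_eq_zero_of_lt hjn]; norm_num
      have ha1 : (Nat.choose n (j + 1) : ℝ) = 0 := by
        rw [Nat.choose_eq_zero_of_lt (by omega)]; norm_num
      rw [ha, ha1]
      ring

theorem stmt_19 (n : ℕ) :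
    ∑ k ∈ range (n + 1),
        (-1 : ℝ) ^ k * (4 ^ k / (2 * (k : ℝ) + 1)) *
          ((Nat.choose n k : ℝ) / (Nat.choose (2 * k) k : ℝ)) =
      1 / (2 * (n : ℝ) + 1) := by
  induction n with
  | zero => norm_num
  | succ n ih =>
    have key : ∑ k ∈ range (n + 2),
        ((2 * (n : ℝ) + 3) * tterm (n + 1) k - (2 * (n : ℝ) + 1) * tterm n k)
        = gfun n (n + 2) - gfun n 0 := by
      rw [← Finset.sum_range_sub (gfun n) (n + 2)]
      exact Finset.sum_congr rfl fun k _ => step n k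
    have hgend : gfun n (n + 2) = 0 := by
      simp [gfun, Nat.choose_eq_zero_of_lt (show n < n + 1 by omega)]
    have hg0 : gfun n 0 = 0 := by simp [gfun]
    rw [hgend, hg0, sub_zero, Finset.sum_sub_distrib, ← Finset.mul_sum, ← Finset.mul_sum] at key
    have htn : ∑ k ∈ range (n + 2), tterm n k = ∑ k ∈ range (n + 1), tterm n k := by
      rw [Finset.sum_range_succ]
      have : tterm n (n + 1) = 0 := by
        simp [tterm, Nat.choose_eq_zero_of_lt (show n < n + 1 by omega)]
      rw [this, add_zero]
    rw [htn] at key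
    have ihs : ∑ k ∈ range (n + 1), tterm n k = 1 / (2 * (n : ℝ) + 1) := ih
    rw [ihs] at key
    have hne : (2 * (n : ℝ) + 1) ≠ 0 := by positivity
    have hne3 : (2 * (n : ℝ) + 3) ≠ 0 := by positivity
    have hs : ∑ k ∈ range (n + 2), tterm (n + 1) k = 1 / (2 * (n : ℝ) + 3) := by
      field_simp at key ⊢
      linarith
    have : ∑ k ∈ range (n + 1 + 1),
        (-1 : ℝ) ^ k * (4 ^ k / (2 * (k : ℝ) + 1)) *
          ((Nat.choose (n + 1) k : ℝ) / (Nat.choose (2 * k) k : ℝ))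
        = ∑ k ∈ range (n + 2), tterm (n + 1) k := rfl
    rw [this, hs]
    push_cast
    ring_nf
end
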